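/- Let $P$ be a contractive lattice homomorphism on a Banach lattice $X$ which is a projection onto a closed sublattice $Y$. Then $P^*(X^*) = \{\phi \in X^* : \phi|_{\ker P} = 0\}$ is a weak*-closed band in $X^*$, and it is isometrically order isomorphic to $Y^*$ via the map $\phi \mapsto \phi \circ P$ from $Y^*$. -/

import Mathlib

open NormedSpace

/-- for a contractive lattice homomorphism projection `P` of a Banach
lattice `X` onto a closed sublattice `Y`, the set `P^*(X^*) = {φ : φ|_{ker P} = 0}`
is a weak*-closed band in `X^*`, isometrically order isomorphic to `Y^*` via
`φ ↦ φ ∘ P`. -/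
theorem stmt_14 {X : Type*} [NormedAddCommGroup X] [Lattice X] [IsOrderedAddMonoid X]
    [HasSolidNorm X] [NormedSpace ℝ X]
    [CompleteSpace X]
    (P : X →L[ℝ] X) (hP1 : ‖P‖ ≤ 1) (hPlat : ∀ x y, P (x ⊔ y) = P x ⊔ P y)
    (hPP : ∀ x, P (P x) = P x)
    (Y : Submodule ℝ X) (hYcl : IsClosed (Y : Set X))
    (hYlat : ∀ x ∈ Y, ∀ y ∈ Y, x ⊔ y ∈ Y)
    (hrange : Set.range P = (Y : Set X)) :
    -- `P^*(X^*)` is exactly the annihilator of `ker P`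
    (Set.range (fun φ : StrongDual ℝ X => φ.comp P) =
      {φ : StrongDual ℝ X | ∀ x, P x = 0 → φ x = 0}) ∧
    -- it is weak*-closed
    IsClosed {φ : WeakDual ℝ X | ∀ x, P x = 0 → φ x = 0} ∧
    -- it is a band: it is solid for the moduli `|φ|(x) = sup {φ y : |y| ≤ x}`
    (∀ φ ∈ {φ : StrongDual ℝ X | ∀ x, P x = 0 → φ x = 0}, ∀ ψ : StrongDual ℝ X,
      (∀ x : X, 0 ≤ x →
        sSup ((fun y => ψ y) '' {y : X | |y| ≤ x}) ≤
          sSup ((fun y => φ y) '' {y : X | |y| ≤ x})) →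
      ψ ∈ {φ : StrongDual ℝ X | ∀ x, P x = 0 → φ x = 0}) ∧
    -- and `φ ↦ φ ∘ P` is an isometric order isomorphism of `Y^*` onto it
    ∃ J : StrongDual ℝ Y → StrongDual ℝ X,
      (∀ (φ : StrongDual ℝ Y) (y : Y), J φ (y : X) = φ y) ∧
      (∀ (φ : StrongDual ℝ Y) (x : X), J φ (P x) = J φ x) ∧
      Function.Injective J ∧
      Set.range J = {φ : StrongDual ℝ X | ∀ x, P x = 0 → φ x = 0} ∧
      (∀ φ, ‖J φ‖ = ‖φ‖) ∧
      (∀ φ ψ : StrongDual ℝ Y,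
        (∀ y : Y, 0 ≤ (y : X) → φ y ≤ ψ y) ↔ (∀ x : X, 0 ≤ x → J φ x ≤ J ψ x)) := by
  -- basic facts about P
  have hmemY : ∀ x, P x ∈ Y := by
    intro x
    have : P x ∈ Set.range P := Set.mem_range_self x
    rwa [hrange] at this
  have hfix : ∀ y ∈ Y, P y = y := by
    intro y hy
    have : y ∈ Set.range P := by rw [hrange]; exact hy
    obtain ⟨z, hz⟩ := this
    rw [← hz, hPP]
  have hmono : ∀ a b : X, a ≤ b → P a ≤ P b := by
    intro a b hab
    have : P a ⊔ P b = P b := by rw [← hPlat, sup_eq_right.mpr hab]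
    exact le_of_sup_eq this
  have habs : ∀ x : X, P |x| = |P x| := by
    intro x
    have h : ∀ z : X, |z| = z ⊔ -z := fun z => rfl
    rw [h, hPlat, map_neg, ← h]
  have hkerideal : ∀ x y : X, P x = 0 → |y| ≤ |x| → P y = 0 := by
    intro x y hx hyx
    have h1 : |P y| = P |y| := (habs y).symm
    have h2 : P |y| ≤ P |x| := hmono _ _ hyx
    have h3 : P |x| = 0 := by rw [habs, hx, abs_zero]
    have h4 : |P y| ≤ 0 := by rw [h1]; rw [h3] at h2; exact h2
    have h5 : P y ≤ 0 := le_trans (le_abs_self _) h4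
    have h6 : -(P y) ≤ 0 := le_trans (neg_le_abs _) h4
    exact le_antisymm h5 (neg_nonpos.mp h6)
  have hcompeq : ∀ φ : StrongDual ℝ X, (∀ x, P x = 0 → φ x = 0) → ∀ x, φ (P x) = φ x := by
    intro φ hφ x
    have h0 : φ (x - P x) = 0 := hφ _ (by rw [map_sub, hPP, sub_self])
    have h2 : φ x - φ (P x) = 0 := by rw [← map_sub]; exact h0
    linarith
  refine ⟨?_, ?_, ?_, ?_⟩
  · -- range = annihilator
    ext φ
    constructor
    · rintro ⟨ψ, rfl⟩ x hx
      simp [hx]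
    · intro hφ
      refine ⟨φ, ?_⟩
      ext x
      exact hcompeq φ hφ x
  · -- weak*-closed
    have : {φ : WeakDual ℝ X | ∀ x, P x = 0 → φ x = 0} =
        ⋂ x ∈ {x : X | P x = 0}, {φ : WeakDual ℝ X | φ x = 0} := by
      ext φ; simp [Set.mem_iInter]
    rw [this]
    exact isClosed_biInter fun x hx =>
      isClosed_eq (WeakDual.eval_continuous x) continuous_const
  · -- band / solid
    intro φ hφ ψ hsup x₀ hx₀
    have habs0 : P |x₀| = 0 := by rw [habs, hx₀, abs_zero]
    have hS : ∀ y : X, |y| ≤ |x₀| → P y = 0 := fun y hy => hkerideal x₀ y hx₀ hy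
    have hφS : (fun y => φ y) '' {y : X | |y| ≤ |x₀|} = {0} := by
      apply Set.eq_singleton_iff_unique_mem.mpr
      constructor
      · exact ⟨0, by simpa using abs_nonneg x₀, by simp⟩
      · rintro z ⟨y, hy, rfl⟩
        exact hφ y (hS y hy)
    have key : sSup ((fun y => ψ y) '' {y : X | |y| ≤ |x₀|}) ≤ 0 := by
      have := hsup |x₀| (abs_nonneg _)
      rw [hφS] at this
      simpa using this
    have hbdd : BddAbove ((fun y => ψ y) '' {y : X | |y| ≤ |x₀|}) := by
      refine ⟨‖ψ‖ * ‖x₀‖, ?_⟩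
      rintro z ⟨y, hy, rfl⟩
      have h1 : ‖y‖ ≤ ‖x₀‖ := by
        have h2 : |y| ≤ |(|x₀|)| := by rwa [abs_of_nonneg (abs_nonneg x₀)]
        calc ‖y‖ ≤ ‖|x₀|‖ := HasSolidNorm.solid h2
        _ = ‖x₀‖ := norm_abs_eq_norm _
      show ψ y ≤ ‖ψ‖ * ‖x₀‖
      calc ψ y ≤ |ψ y| := le_abs_self _
      _ = ‖ψ y‖ := (Real.norm_eq_abs _).symm
      _ ≤ ‖ψ‖ * ‖y‖ := ψ.le_opNorm y
      _ ≤ ‖ψ‖ * ‖x₀‖ := mul_le_mul_of_nonneg_left h1 (norm_nonneg _)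
    have hx₀mem : x₀ ∈ {y : X | |y| ≤ |x₀|} := le_refl _
    have hnx₀mem : -x₀ ∈ {y : X | |y| ≤ |x₀|} := by simp [Set.mem_setOf_eq, abs_neg]
    have h1 : ψ x₀ ≤ 0 :=
      le_trans (le_csSup hbdd ⟨x₀, hx₀mem, rfl⟩) key
    have h2 : ψ (-x₀) ≤ 0 :=
      le_trans (le_csSup hbdd ⟨-x₀, hnx₀mem, rfl⟩) key
    rw [map_neg] at h2
    linarith
  · -- the isomorphism J
    set Pc : X →L[ℝ] Y := P.codRestrict Y hmemY with hPc
    refine ⟨fun φ => φ.comp Pc, ?_, ?_, ?_, ?_, ?_, ?_⟩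
    · intro φ y
      have : Pc (y : X) = y := Subtype.ext (hfix y y.2)
      simp [this]
    · intro φ x
      have : Pc (P x) = Pc x := Subtype.ext (hPP x)
      simp [this]
    · intro φ ψ h
      ext y
      have h1 : Pc (y : X) = y := Subtype.ext (hfix y y.2)
      have := congrArg (fun f : StrongDual ℝ X => f (y : X)) h
      simpa [h1] using this
    · ext φ
      constructor
      · rintro ⟨ψ, rfl⟩ x hx
        have : Pc x = 0 := Subtype.ext hx
        simp [this]
      · intro hφ
        refine ⟨φ.comp Y.subtypeL, ?_⟩
        ext x
        simp only [ContinuousLinearMap.comp_apply, Submodule.subtypeL_apply]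
        show φ ((Pc x : X)) = φ x
        exact hcompeq φ hφ x
    · intro φ
      apply le_antisymm
      · apply ContinuousLinearMap.opNorm_le_bound _ (norm_nonneg φ)
        intro x
        calc ‖(φ.comp Pc) x‖ = ‖φ (Pc x)‖ := rfl
        _ ≤ ‖φ‖ * ‖Pc x‖ := φ.le_opNorm _
        _ = ‖φ‖ * ‖P x‖ := rfl
        _ ≤ ‖φ‖ * (‖P‖ * ‖x‖) := by
            exact mul_le_mul_of_nonneg_left (P.le_opNorm x) (by positivity)
        _ ≤ ‖φ‖ * (1 * ‖x‖) := by
            gcongr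
        _ = ‖φ‖ * ‖x‖ := by ring
      · apply ContinuousLinearMap.opNorm_le_bound _ (norm_nonneg _)
        intro y
        have h1 : Pc (y : X) = y := Subtype.ext (hfix y y.2)
        calc ‖φ y‖ = ‖(φ.comp Pc) (y : X)‖ := by simp [h1]
        _ ≤ ‖φ.comp Pc‖ * ‖(y : X)‖ := (φ.comp Pc).le_opNorm _
        _ = ‖φ.comp Pc‖ * ‖y‖ := rfl
    · intro φ ψ
      constructor
      · intro h x hx
        have hPx : 0 ≤ P x := by
          have := hPlat x 0
          rw [sup_eq_left.mpr hx, map_zero] at this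
          rw [this]
          exact le_sup_right
        exact h ⟨P x, hmemY x⟩ hPx
      · intro h y hy
        have h1 : Pc (y : X) = y := Subtype.ext (hfix y y.2)
        have := h (y : X) hy
        simpa [h1] using this
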